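/- Let μ0 ≤_cvx μ1 be probability measures on ℝ^d with μ1 compactly supported. Let μ̂0 be the law of an optimal quadratic primal quantization of μ0 at level N (so there exists a martingale coupling between μ̂0 and μ0 with quadratic cost e_{2,N}(μ0)²) and let μ̂1 be an optimal quadratic dual quantization of μ1 at level M (so μ1 ≤_cvx μ̂1, μ̂1 is supported on at most M points, and there exists a martingale coupling between μ1 and μ̂1 with quadratic cost d_{2,M}(μ1)²). Then for every martingale coupling μ ∈ M(μ0,μ1) there exists a martingale coupling μ̂ ∈ M(μ̂0,μ̂1) such that W_2²(μ̂,μ) ≤ e_{2,N}²(μ0) + d_{2,M}²(μ1), where W_2 denotes the quadratic Wasserstein distance on probability measures over ℝ^d×ℝ^d. -/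

import Mathlib

open MeasureTheory Metric
open scoped ENNReal

noncomputable section

abbrev Euc (d : ℕ) : Type := EuclideanSpace ℝ (Fin d)

/-- Convex order `μ ≤_cvx ν` (tested on convex functions with linear growth). -/
def cvxOrder {d : ℕ} (μ ν : Measure (Euc d)) : Prop :=
  ∀ φ : Euc d → ℝ, ConvexOn ℝ Set.univ φ → (∃ C : ℝ, ∀ x, |φ x| ≤ C * (1 + ‖x‖)) →
    ∫ x, φ x ∂μ ≤ ∫ x, φ x ∂ν

/-- Martingale coupling between `μ` and `ν`. -/
def IsMartingaleCoupling {d : ℕ} (M : Measure (Euc d × Euc d)) (μ ν : Measure (Euc d)) : Prop :=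
  IsProbabilityMeasure M ∧ M.fst = μ ∧ M.snd = ν ∧
    ∀ φ : Euc d → Euc d, Measurable φ → (∃ C : ℝ, ∀ x, ‖φ x‖ ≤ C) →
      ∫ z, (inner ℝ (φ z.1) (z.2 - z.1) : ℝ) ∂M = 0

/-- Quadratic quantization error of the grid `Γ` for `μ`. -/
def e2 {d : ℕ} (Γ : Finset (Euc d)) (μ : Measure (Euc d)) : ℝ :=
  (∫ x, infDist x (Γ : Set (Euc d)) ^ 2 ∂μ) ^ (1/2 : ℝ)

/-- Optimal quadratic (primal) quantization error at level `N`. -/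
def e2N {d : ℕ} (N : ℕ) (μ : Measure (Euc d)) : ℝ :=
  sInf { r | ∃ Γ : Finset (Euc d), Γ.Nonempty ∧ Γ.card ≤ N ∧ r = e2 Γ μ }

/-- `ν` is supported on at most `N` points. -/
def supportedOnAtMost {d : ℕ} (ν : Measure (Euc d)) (N : ℕ) : Prop :=
  ∃ s : Finset (Euc d), s.card ≤ N ∧ ν (((s : Set (Euc d)))ᶜ) = 0

/-- Squared optimal dual quantization error at level `N`: infimum of the squared quadratic
cost of martingale couplings from `μ` to measures with at most `N` support points that
dominate `μ` in the convex order. -/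
def d2Msq {d : ℕ} (μ : Measure (Euc d)) (N : ℕ) : ℝ :=
  sInf { r | ∃ (ν : Measure (Euc d)) (π : Measure (Euc d × Euc d)),
      IsProbabilityMeasure ν ∧ supportedOnAtMost ν N ∧ cvxOrder μ ν ∧
      IsMartingaleCoupling π μ ν ∧ r = ∫ z, ‖z.2 - z.1‖ ^ 2 ∂π }

/-- Squared quadratic Wasserstein distance between probability measures on `ℝ^d × ℝ^d`,
with the cost `|x̂₀-x₀|² + |x̂₁-x₁|²`. -/
def W2sqPair {d : ℕ} (π ρ : Measure (Euc d × Euc d)) : ℝ :=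
  sInf { r | ∃ M : Measure ((Euc d × Euc d) × (Euc d × Euc d)), IsProbabilityMeasure M ∧
      M.fst = π ∧ M.snd = ρ ∧
      r = ∫ z, (‖z.1.1 - z.2.1‖ ^ 2 + ‖z.1.2 - z.2.2‖ ^ 2) ∂M }

open ProbabilityTheory Filter

section helpers
lemma map_compProd_comap {α β γ : Type*} [MeasurableSpace α] [MeasurableSpace β]
    [MeasurableSpace γ] (ρ : Measure α) [IsFiniteMeasure ρ] {f : α → β} (hf : Measurable f)
    (κ : Kernel β γ) [IsSFiniteKernel κ] :
    (ρ ⊗ₘ κ.comap f hf).map (fun p => (f p.1, p.2)) = (ρ.map f) ⊗ₘ κ := by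
  haveI : IsFiniteMeasure (ρ.map f) := Measure.isFiniteMeasure_map ρ f
  have hg : Measurable fun p : α × γ => (f p.1, p.2) := by fun_prop
  ext s hs
  rw [Measure.map_apply hg hs, Measure.compProd_apply (hg hs), Measure.compProd_apply hs,
    lintegral_map (Kernel.measurable_kernel_prodMk_left hs) hf]
  refine lintegral_congr fun a => ?_
  rw [Kernel.comap_apply]
  rfl

lemma integrable_norm_comp {α : Type*} [MeasurableSpace α] {d : ℕ} (ν : Measure α)
    {g : α → Euc d} (hg : Measurable g) (h : Integrable (fun x => ‖x‖) (ν.map g)) :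
    Integrable (fun w => ‖g w‖) ν :=
  (integrable_map_measure measurable_norm.aestronglyMeasurable hg.aemeasurable).mp h

end helpers

lemma condKernel_bary {d : ℕ} (ρ : Measure (Euc d × Euc d)) [IsProbabilityMeasure ρ]
    (h1 : Integrable (fun z : Euc d × Euc d => ‖z.1‖ + ‖z.2‖) ρ)
    (hmg : ∀ φ : Euc d → Euc d, Measurable φ → (∃ C : ℝ, ∀ x, ‖φ x‖ ≤ C) →
      ∫ z, (inner ℝ (φ z.1) (z.2 - z.1) : ℝ) ∂ρ = 0) :
    ∀ᵐ x ∂ρ.fst, Integrable (fun y => y) (ρ.condKernel x) ∧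
      (∫ y, y ∂(ρ.condKernel x)) = x := by
  set κ := ρ.condKernel with hκ
  have hdis : ρ.fst ⊗ₘ κ = ρ := ρ.disintegrate ρ.condKernel
  -- integrability of z ↦ z.2 - z.1
  have hsubm : Measurable fun z : Euc d × Euc d => z.2 - z.1 := by fun_prop
  have hsub : Integrable (fun z : Euc d × Euc d => z.2 - z.1) ρ := by
    refine h1.mono' hsubm.aestronglyMeasurable (Eventually.of_forall fun z => ?_)
    have h2 : ‖z.2 - z.1‖ ≤ ‖z.1‖ + ‖z.2‖ := by
      calc ‖z.2 - z.1‖ ≤ ‖z.2‖ + ‖z.1‖ := norm_sub_le _ _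
      _ = _ := add_comm _ _
    exact h2
  have hsubC : Integrable (fun z : Euc d × Euc d => z.2 - z.1) (ρ.fst ⊗ₘ κ) := by
    rwa [hdis]
  have hsec : ∀ᵐ x ∂ρ.fst, Integrable (fun y => y - x) (κ x) :=
    ((Measure.integrable_compProd_iff hsubC.aestronglyMeasurable).mp hsubC).1
  have hsecnorm : Integrable (fun x => ∫ y, ‖y - x‖ ∂κ x) ρ.fst :=
    ((Measure.integrable_compProd_iff hsubC.aestronglyMeasurable).mp hsubC).2
  -- barycenter
  set b : Euc d → Euc d := fun x => ∫ y, y - x ∂κ x with hb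
  have hbm : StronglyMeasurable b := by
    apply StronglyMeasurable.integral_kernel_prod_right (κ := κ)
      (f := fun x y => y - x)
    exact (measurable_snd.sub measurable_fst).stronglyMeasurable
  set φ : Euc d → Euc d := fun x => (1 + ‖b x‖)⁻¹ • (b x) with hφ
  have hφm : Measurable φ := by
    apply Measurable.fun_smul
    · exact ((measurable_const.add hbm.measurable.norm).inv)
    · exact hbm.measurable
  have hφb : ∀ x, ‖φ x‖ ≤ 1 := by
    intro x
    rw [hφ]
    simp only [norm_smul, Real.norm_eq_abs]
    rw [abs_of_nonneg (by positivity)]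
    rw [inv_mul_le_iff₀ (by positivity), mul_one]
    linarith [norm_nonneg (b x)]
  have h0 := hmg φ hφm ⟨1, hφb⟩
  rw [← hdis] at h0
  have hgi : Integrable (fun z : Euc d × Euc d => (inner ℝ (φ z.1) (z.2 - z.1) : ℝ))
      (ρ.fst ⊗ₘ κ) := by
    refine hsubC.norm.mono' ?_ (Eventually.of_forall fun z => ?_)
    · exact (Measurable.inner (hφm.comp measurable_fst) hsubm).aestronglyMeasurable
    · calc ‖(inner ℝ (φ z.1) (z.2 - z.1) : ℝ)‖ ≤ ‖φ z.1‖ * ‖z.2 - z.1‖ := norm_inner_le_norm _ _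
      _ ≤ 1 * ‖z.2 - z.1‖ := by
          exact mul_le_mul_of_nonneg_right (hφb _) (norm_nonneg _)
      _ = ‖z.2 - z.1‖ := one_mul _
  rw [Measure.integral_compProd hgi] at h0
  -- inner integral equals inner ℝ (φ x) (b x) a.e.
  have hinner : ∀ᵐ x ∂ρ.fst,
      (∫ y, (inner ℝ (φ x) (y - x) : ℝ) ∂κ x) = (inner ℝ (φ x) (b x) : ℝ) := by
    filter_upwards [hsec] with x hx
    rw [integral_inner hx]
  have h0' : ∫ x, (inner ℝ (φ x) (b x) : ℝ) ∂ρ.fst = 0 := by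
    rw [← integral_congr_ae hinner]; exact h0
  -- nonneg function with zero integral
  have hg1eq : ∀ x, (inner ℝ (φ x) (b x) : ℝ) = (1 + ‖b x‖)⁻¹ * ‖b x‖ ^ 2 := by
    intro x
    rw [hφ]
    simp only [real_inner_smul_left]
    rw [real_inner_self_eq_norm_sq]
  have hg1int : Integrable (fun x => (inner ℝ (φ x) (b x) : ℝ)) ρ.fst := by
    refine hsecnorm.mono' ?_ ?_
    · exact (Measurable.inner hφm hbm.measurable).aestronglyMeasurable
    · filter_upwards [hsec] with x hx
      calc ‖(inner ℝ (φ x) (b x) : ℝ)‖ ≤ ‖φ x‖ * ‖b x‖ := norm_inner_le_norm _ _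
      _ ≤ 1 * ‖b x‖ := mul_le_mul_of_nonneg_right (hφb _) (norm_nonneg _)
      _ = ‖∫ y, y - x ∂κ x‖ := by rw [one_mul]
      _ ≤ ∫ y, ‖y - x‖ ∂κ x := norm_integral_le_integral_norm _
  have hzero : ∀ᵐ x ∂ρ.fst, (inner ℝ (φ x) (b x) : ℝ) = 0 := by
    have hnn : 0 ≤ fun x => (inner ℝ (φ x) (b x) : ℝ) := by
      intro x
      show (0:ℝ) ≤ inner ℝ (φ x) (b x)
      rw [hg1eq]; positivity
    have := (integral_eq_zero_iff_of_nonneg hnn hg1int).mp h0'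
    filter_upwards [this] with x hx using by simpa using hx
  filter_upwards [hzero, hsec] with x hx hxint
  have hbx : b x = 0 := by
    rw [hg1eq] at hx
    have h2 : ‖b x‖ ^ 2 = 0 := by
      have hpos : (0 : ℝ) < (1 + ‖b x‖)⁻¹ := by positivity
      rcases mul_eq_zero.mp hx with h | h
      · exact absurd h hpos.ne'
      · exact h
    simpa [pow_eq_zero_iff] using h2
  have hyint : Integrable (fun y : Euc d => y) (κ x) := by
    have h := hxint.add (integrable_const x)
    have heq : (fun y : Euc d => y) = fun y : Euc d => (y - x) + x := by
      funext y; simp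
    rw [heq]; exact h
  refine ⟨hyint, ?_⟩
  haveI : IsProbabilityMeasure (κ x) := IsMarkovKernel.isProbabilityMeasure x
  have : ∫ y, y - x ∂κ x = (∫ y, y ∂κ x) - x := by
    rw [integral_sub hyint (integrable_const x), integral_const]
    simp
  have hbx' : (∫ y, y - x ∂κ x) = 0 := hbx
  rw [this] at hbx'
  exact sub_eq_zero.mp hbx'


/-- Let `μ0 ≤_cvx μ1` with `μ1` compactly supported, `μ̂0` the law of an
optimal quadratic primal quantization of `μ0` at level `N` and `μ̂1` an optimal quadratic dual
quantization of `μ1` at level `M`. Then every martingale coupling `μ` of `(μ0,μ1)` admits a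
martingale coupling `μ̂` of `(μ̂0,μ̂1)` with `W₂²(μ̂,μ) ≤ e_{2,N}²(μ0) + d_{2,M}²(μ1)`. -/
theorem stmt4 {d : ℕ} (N M : ℕ)
    (μ0 μ1 : Measure (Euc d)) [IsProbabilityMeasure μ0] [IsProbabilityMeasure μ1]
    (hm0 : Integrable (fun x => ‖x‖) μ0) (hm1 : Integrable (fun x => ‖x‖) μ1)
    (hcvx : cvxOrder μ0 μ1)
    (hK : ∃ K : Set (Euc d), IsCompact K ∧ μ1 Kᶜ = 0)
    (μhat0 μhat1 : Measure (Euc d))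
    [IsProbabilityMeasure μhat0] [IsProbabilityMeasure μhat1]
    (hq0 : ∃ π0 : Measure (Euc d × Euc d), IsMartingaleCoupling π0 μhat0 μ0 ∧
        ∫ z, ‖z.2 - z.1‖ ^ 2 ∂π0 = (e2N N μ0) ^ 2)
    (hq1cvx : cvxOrder μ1 μhat1) (hq1supp : supportedOnAtMost μhat1 M)
    (hq1 : ∃ π1 : Measure (Euc d × Euc d), IsMartingaleCoupling π1 μ1 μhat1 ∧
        ∫ z, ‖z.2 - z.1‖ ^ 2 ∂π1 = d2Msq μ1 M) :
    ∀ μ : Measure (Euc d × Euc d), IsMartingaleCoupling μ μ0 μ1 →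
      ∃ μhat : Measure (Euc d × Euc d), IsMartingaleCoupling μhat μhat0 μhat1 ∧
        W2sqPair μhat μ ≤ (e2N N μ0) ^ 2 + d2Msq μ1 M := by
  classical
  intro μ hμ
  obtain ⟨π0, hπ0, hπ0cost⟩ := hq0
  obtain ⟨π1, hπ1, hπ1cost⟩ := hq1
  obtain ⟨hP0, hfst0, hsnd0, hmg0⟩ := hπ0
  obtain ⟨hPμ, hfstμ, hsndμ, hmgμ⟩ := hμ
  obtain ⟨hP1, hfst1, hsnd1, hmg1⟩ := hπ1
  haveI := hP0; haveI := hPμ; haveI := hP1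
  -- first moment of μhat1
  have hm1' : Integrable (fun x => ‖x‖) μhat1 := by
    obtain ⟨s, _, hs0⟩ := hq1supp
    have hae : ∀ᵐ x ∂μhat1, x ∈ (s : Set (Euc d)) := by
      rw [ae_iff]; exact hs0
    refine (integrable_const ((s.sup (fun x => ‖x‖₊) : NNReal) : ℝ)).mono'
      measurable_norm.aestronglyMeasurable ?_
    filter_upwards [hae] with x hx
    rw [Real.norm_of_nonneg (norm_nonneg _)]
    exact_mod_cast NNReal.coe_le_coe.mpr (Finset.le_sup (f := fun x => ‖x‖₊) hx)
  -- kernels and glued measure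
  set κ : Kernel (Euc d) (Euc d) := μ.condKernel with hκdef
  set κ1 : Kernel (Euc d) (Euc d) := π1.condKernel with hκ1def
  have hμdis : μ0 ⊗ₘ κ = μ := by rw [← hfstμ, hκdef]; exact μ.disintegrate μ.condKernel
  have hπ1dis : μ1 ⊗ₘ κ1 = π1 := by rw [← hfst1, hκ1def]; exact π1.disintegrate π1.condKernel
  set η : Kernel (Euc d × Euc d) (Euc d) := κ.comap Prod.snd measurable_snd with hηdef
  set Λ3 : Measure ((Euc d × Euc d) × Euc d) := π0 ⊗ₘ η with hΛ3def
  set η1 : Kernel ((Euc d × Euc d) × Euc d) (Euc d) := κ1.comap Prod.snd measurable_snd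
    with hη1def
  set Λ4 : Measure (((Euc d × Euc d) × Euc d) × Euc d) := Λ3 ⊗ₘ η1 with hΛ4def
  haveI : IsProbabilityMeasure Λ3 := by rw [hΛ3def]; infer_instance
  haveI : IsProbabilityMeasure Λ4 := by rw [hΛ4def]; infer_instance
  -- projections
  set p01 : ((Euc d × Euc d) × Euc d) × Euc d → Euc d × Euc d := fun w => w.1.1 with hp01def
  set pμ3 : (Euc d × Euc d) × Euc d → Euc d × Euc d := fun p => (p.1.2, p.2) with hpμ3def
  set pμ4 : ((Euc d × Euc d) × Euc d) × Euc d → Euc d × Euc d := fun w => (w.1.1.2, w.1.2)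
    with hpμ4def
  set pπ1 : ((Euc d × Euc d) × Euc d) × Euc d → Euc d × Euc d := fun p => (p.1.2, p.2)
    with hpπ1def
  set ghat : ((Euc d × Euc d) × Euc d) × Euc d → Euc d × Euc d := fun w => (w.1.1.1, w.2)
    with hghatdef
  set gM : ((Euc d × Euc d) × Euc d) × Euc d → (Euc d × Euc d) × (Euc d × Euc d) :=
    fun w => ((w.1.1.1, w.2), (w.1.1.2, w.1.2)) with hgMdef
  have hp01m : Measurable p01 := by fun_prop
  have hpμ3m : Measurable pμ3 := by fun_prop
  have hpμ4m : Measurable pμ4 := by fun_prop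
  have hpπ1m : Measurable pπ1 := by fun_prop
  have hghatm : Measurable ghat := by fun_prop
  have hgMm : Measurable gM := by fun_prop
  -- marginal laws
  have hL4fst : Λ4.map Prod.fst = Λ3 := Measure.fst_compProd Λ3 η1
  have hL3fst : Λ3.map Prod.fst = π0 := Measure.fst_compProd π0 η
  have hL01 : Λ4.map p01 = π0 := by
    rw [hp01def, show (fun w : ((Euc d × Euc d) × Euc d) × Euc d => w.1.1)
      = Prod.fst ∘ Prod.fst from rfl, ← Measure.map_map measurable_fst measurable_fst,
      hL4fst, hL3fst]
  have hLμ3 : Λ3.map pμ3 = μ := by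
    rw [hpμ3def, hΛ3def, hηdef, map_compProd_comap π0 measurable_snd κ,
      show π0.map Prod.snd = μ0 from hsnd0, hμdis]
  have hLX1 : Λ3.map Prod.snd = μ1 := by
    rw [show (Prod.snd : (Euc d × Euc d) × Euc d → Euc d) = Prod.snd ∘ pμ3 from rfl,
      ← Measure.map_map measurable_snd hpμ3m, hLμ3]
    exact hsndμ
  have hL4π1 : Λ4.map pπ1 = π1 := by
    rw [hpπ1def, hΛ4def, hη1def, map_compProd_comap Λ3 measurable_snd κ1, hLX1, hπ1dis]
  have hLμ4 : Λ4.map pμ4 = μ := by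
    rw [hpμ4def, show (fun w : ((Euc d × Euc d) × Euc d) × Euc d => (w.1.1.2, w.1.2))
      = pμ3 ∘ Prod.fst from rfl, ← Measure.map_map hpμ3m measurable_fst, hL4fst, hLμ3]
  have hLhat0 : Λ4.map (fun w => w.1.1.1) = μhat0 := by
    rw [show (fun w : ((Euc d × Euc d) × Euc d) × Euc d => w.1.1.1)
      = Prod.fst ∘ p01 from rfl, ← Measure.map_map measurable_fst hp01m, hL01]
    exact hfst0
  have hLhat1 : Λ4.map (fun w => w.2) = μhat1 := by
    rw [show (fun w : ((Euc d × Euc d) × Euc d) × Euc d => w.2)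
      = Prod.snd ∘ pπ1 from rfl, ← Measure.map_map measurable_snd hpπ1m, hL4π1]
    exact hsnd1
  have hLX0 : Λ4.map (fun w => w.1.1.2) = μ0 := by
    rw [show (fun w : ((Euc d × Euc d) × Euc d) × Euc d => w.1.1.2)
      = Prod.fst ∘ pμ4 from rfl, ← Measure.map_map measurable_fst hpμ4m, hLμ4]
    exact hfstμ
  have hLX1' : Λ4.map (fun w => w.1.2) = μ1 := by
    rw [show (fun w : ((Euc d × Euc d) × Euc d) × Euc d => w.1.2)
      = Prod.snd ∘ pμ4 from rfl, ← Measure.map_map measurable_snd hpμ4m, hLμ4]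
    exact hsndμ
  -- coordinate integrability under Λ4
  have hi0 : Integrable (fun w => ‖w.1.1.2‖) Λ4 :=
    integrable_norm_comp Λ4 (by fun_prop) (by rw [hLX0]; exact hm0)
  have hi1 : Integrable (fun w => ‖w.1.2‖) Λ4 :=
    integrable_norm_comp Λ4 (by fun_prop) (by rw [hLX1']; exact hm1)
  have hihat1 : Integrable (fun w => ‖w.2‖) Λ4 :=
    integrable_norm_comp Λ4 (by fun_prop) (by rw [hLhat1]; exact hm1')
  -- barycenter properties
  have hbarμ : ∀ᵐ x ∂μ0, Integrable (fun y => y) (κ x) ∧ (∫ y, y ∂(κ x)) = x := by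
    have h1μ : Integrable (fun z : Euc d × Euc d => ‖z.1‖ + ‖z.2‖) μ := by
      refine Integrable.add ?_ ?_
      · refine integrable_norm_comp μ measurable_fst ?_
        rw [show μ.map Prod.fst = μ0 from hfstμ]
        exact hm0
      · refine integrable_norm_comp μ measurable_snd ?_
        rw [show μ.map Prod.snd = μ1 from hsndμ]
        exact hm1
    have := condKernel_bary μ h1μ hmgμ
    rw [hfstμ] at this
    exact this
  have hbar1 : ∀ᵐ x ∂μ1, Integrable (fun y => y) (κ1 x) ∧ (∫ y, y ∂(κ1 x)) = x := by
    have h1π1 : Integrable (fun z : Euc d × Euc d => ‖z.1‖ + ‖z.2‖) π1 := by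
      refine Integrable.add ?_ ?_
      · exact integrable_norm_comp π1 measurable_fst
          (by rw [show π1.map Prod.fst = μ1 from hfst1]; exact hm1)
      · exact integrable_norm_comp π1 measurable_snd
          (by rw [show π1.map Prod.snd = μhat1 from hsnd1]; exact hm1')
    have := condKernel_bary π1 h1π1 hmg1
    rw [hfst1] at this
    exact this
  -- the candidate coupling
  refine ⟨Λ4.map ghat, ⟨Measure.isProbabilityMeasure_map hghatm.aemeasurable, ?_, ?_, ?_⟩, ?_⟩
  · -- fst
    rw [show (Λ4.map ghat).fst = (Λ4.map ghat).map Prod.fst from rfl,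
      Measure.map_map measurable_fst hghatm]
    exact hLhat0
  · -- snd
    rw [show (Λ4.map ghat).snd = (Λ4.map ghat).map Prod.snd from rfl,
      Measure.map_map measurable_snd hghatm]
    exact hLhat1
  · -- martingale property
    intro φ hφm hφb
    obtain ⟨C, hφC⟩ := hφb
    have hC0 : 0 ≤ C := le_trans (norm_nonneg _) (hφC 0)
    have hfφm : Measurable (fun z : Euc d × Euc d => (inner ℝ (φ z.1) (z.2 - z.1) : ℝ)) :=
      Measurable.inner (hφm.comp measurable_fst) (measurable_snd.sub measurable_fst)
    have hmap : ∫ z, (inner ℝ (φ z.1) (z.2 - z.1) : ℝ) ∂(Λ4.map ghat)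
        = ∫ w, (inner ℝ (φ (ghat w).1) ((ghat w).2 - (ghat w).1) : ℝ) ∂Λ4 :=
      integral_map hghatm.aemeasurable hfφm.aestronglyMeasurable
    set f1 : ((Euc d × Euc d) × Euc d) × Euc d → ℝ :=
      fun w => inner ℝ (φ w.1.1.1) (w.1.1.2 - w.1.1.1) with hf1def
    set f2 : ((Euc d × Euc d) × Euc d) × Euc d → ℝ :=
      fun w => inner ℝ (φ w.1.1.1) (w.1.2 - w.1.1.2) with hf2def
    set f3 : ((Euc d × Euc d) × Euc d) × Euc d → ℝ :=
      fun w => inner ℝ (φ w.1.1.1) (w.2 - w.1.2) with hf3def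
    have hsplit : ∀ w, (inner ℝ (φ (ghat w).1) ((ghat w).2 - (ghat w).1) : ℝ)
        = f1 w + f2 w + f3 w := by
      intro w
      show (inner ℝ (φ w.1.1.1) (w.2 - w.1.1.1) : ℝ) = _
      rw [hf1def, hf2def, hf3def]
      have hv : (w.1.1.2 - w.1.1.1) + (w.1.2 - w.1.1.2) + (w.2 - w.1.2)
          = w.2 - w.1.1.1 := by abel
      rw [← hv, inner_add_right, inner_add_right]
    have hf1m : Measurable f1 := by
      apply Measurable.inner (hφm.comp (by fun_prop)) (by fun_prop)
    have hf2m : Measurable f2 := by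
      apply Measurable.inner (hφm.comp (by fun_prop)) (by fun_prop)
    have hf3m : Measurable f3 := by
      apply Measurable.inner (hφm.comp (by fun_prop)) (by fun_prop)
    have hf2i : Integrable f2 Λ4 := by
      refine ((hi1.add hi0).const_mul C).mono' hf2m.aestronglyMeasurable ?_
      refine Eventually.of_forall fun w => ?_
      calc ‖f2 w‖ ≤ ‖φ w.1.1.1‖ * ‖w.1.2 - w.1.1.2‖ := norm_inner_le_norm _ _
      _ ≤ C * (‖w.1.2‖ + ‖w.1.1.2‖) := by
          refine mul_le_mul (hφC _) (norm_sub_le _ _) (norm_nonneg _) hC0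
    have hf3i : Integrable f3 Λ4 := by
      refine ((hihat1.add hi1).const_mul C).mono' hf3m.aestronglyMeasurable ?_
      refine Eventually.of_forall fun w => ?_
      calc ‖f3 w‖ ≤ ‖φ w.1.1.1‖ * ‖w.2 - w.1.2‖ := norm_inner_le_norm _ _
      _ ≤ C * (‖w.2‖ + ‖w.1.2‖) := by
          refine mul_le_mul (hφC _) (norm_sub_le _ _) (norm_nonneg _) hC0
    by_cases hI : Integrable
        (fun w => (inner ℝ (φ (ghat w).1) ((ghat w).2 - (ghat w).1) : ℝ)) Λ4
    · have hItot : Integrable (fun w => f1 w + f2 w + f3 w) Λ4 :=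
        hI.congr (Eventually.of_forall fun w => hsplit w)
      have hf1i : Integrable f1 Λ4 := by
        have he : f1 = fun w => ((f1 w + f2 w + f3 w) - f2 w) - f3 w := by
          funext w; ring
        rw [he]
        exact (hItot.sub hf2i).sub hf3i
      have h1 : ∫ w, f1 w ∂Λ4 = 0 := by
        have : ∫ w, f1 w ∂Λ4 = ∫ z, (inner ℝ (φ z.1) (z.2 - z.1) : ℝ) ∂π0 := by
          rw [← hL01, integral_map hp01m.aemeasurable hfφm.aestronglyMeasurable]
        rw [this]
        exact hmg0 φ hφm ⟨C, hφC⟩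
      have h2 : ∫ w, f2 w ∂Λ4 = 0 := by
        set h2f : (Euc d × Euc d) × Euc d → ℝ := fun v => inner ℝ (φ v.1.1) (v.2 - v.1.2)
          with hh2fdef
        have hh2m : Measurable h2f := by
          apply Measurable.inner (hφm.comp (by fun_prop)) (by fun_prop)
        have e1 : ∫ w, f2 w ∂Λ4 = ∫ v, h2f v ∂Λ3 := by
          rw [← hL4fst, integral_map measurable_fst.aemeasurable hh2m.aestronglyMeasurable]
        have hh2i : Integrable h2f Λ3 := by
          rw [← hL4fst]
          exact (integrable_map_measure hh2m.aestronglyMeasurable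
            measurable_fst.aemeasurable).mpr hf2i
        rw [e1, hΛ3def]
        rw [hΛ3def] at hh2i
        rw [Measure.integral_compProd hh2i]
        have haez : ∀ᵐ z ∂π0, Integrable (fun y : Euc d => y) (κ z.2)
            ∧ (∫ y, y ∂(κ z.2)) = z.2 := by
          refine ae_of_ae_map (measurable_snd.aemeasurable (μ := π0))
            (p := fun x => Integrable (fun y : Euc d => y) (κ x) ∧ (∫ y, y ∂(κ x)) = x) ?_
          rw [show π0.map Prod.snd = μ0 from hsnd0]
          exact hbarμ
        have hz0 : ∀ᵐ z ∂π0, (∫ y, h2f (z, y) ∂(η z)) = 0 := by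
          filter_upwards [haez] with z hz
          haveI : IsProbabilityMeasure (κ z.2) := IsMarkovKernel.isProbabilityMeasure _
          have hη : η z = κ z.2 := rfl
          rw [hη]
          have hint : Integrable (fun y : Euc d => y - z.2) (κ z.2) :=
            hz.1.sub (integrable_const _)
          calc ∫ y, h2f (z, y) ∂(κ z.2)
              = ∫ y, (inner ℝ (φ z.1) (y - z.2) : ℝ) ∂(κ z.2) := rfl
          _ = inner ℝ (φ z.1) (∫ y, y - z.2 ∂(κ z.2)) := integral_inner hint _
          _ = 0 := by
              rw [integral_sub hz.1 (integrable_const _), integral_const]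
              simp [hz.2]
        rw [integral_congr_ae hz0, integral_zero]
      have h3 : ∫ w, f3 w ∂Λ4 = 0 := by
        have hf3i' : Integrable f3 (Λ3 ⊗ₘ η1) := by rw [← hΛ4def]; exact hf3i
        rw [hΛ4def, Measure.integral_compProd hf3i']
        have haev : ∀ᵐ v ∂Λ3, Integrable (fun y : Euc d => y) (κ1 v.2)
            ∧ (∫ y, y ∂(κ1 v.2)) = v.2 := by
          refine ae_of_ae_map (measurable_snd.aemeasurable (μ := Λ3))
            (p := fun x => Integrable (fun y : Euc d => y) (κ1 x) ∧ (∫ y, y ∂(κ1 x)) = x) ?_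
          rw [hLX1]
          exact hbar1
        have hv0 : ∀ᵐ v ∂Λ3, (∫ y, f3 (v, y) ∂(η1 v)) = 0 := by
          filter_upwards [haev] with v hv
          haveI : IsProbabilityMeasure (κ1 v.2) := IsMarkovKernel.isProbabilityMeasure _
          have hη1 : η1 v = κ1 v.2 := rfl
          rw [hη1]
          have hint : Integrable (fun y : Euc d => y - v.2) (κ1 v.2) :=
            hv.1.sub (integrable_const _)
          calc ∫ y, f3 (v, y) ∂(κ1 v.2)
              = ∫ y, (inner ℝ (φ v.1.1) (y - v.2) : ℝ) ∂(κ1 v.2) := rfl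
          _ = inner ℝ (φ v.1.1) (∫ y, y - v.2 ∂(κ1 v.2)) := integral_inner hint _
          _ = 0 := by
              rw [integral_sub hv.1 (integrable_const _), integral_const]
              simp [hv.2]
        rw [integral_congr_ae hv0, integral_zero]
      rw [hmap, integral_congr_ae (Eventually.of_forall hsplit)]
      have hadd1 : ∫ w, (f1 w + f2 w + f3 w) ∂Λ4
          = (∫ w, (f1 w + f2 w) ∂Λ4) + ∫ w, f3 w ∂Λ4 := integral_add (hf1i.add hf2i) hf3i
      have hadd2 : ∫ w, (f1 w + f2 w) ∂Λ4 = (∫ w, f1 w ∂Λ4) + ∫ w, f2 w ∂Λ4 :=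
        integral_add hf1i hf2i
      rw [hadd1, hadd2, h1, h2, h3]
      ring
    · rw [hmap]
      exact integral_undef hI
  · -- Wasserstein bound
    have hd2 : 0 ≤ d2Msq μ1 M := by
      apply Real.sInf_nonneg
      rintro r ⟨ν, π, _, _, _, _, hr⟩
      rw [hr]
      exact integral_nonneg fun z => by positivity
    have hcostm : Measurable
        (fun z : (Euc d × Euc d) × (Euc d × Euc d) =>
          ‖z.1.1 - z.2.1‖ ^ 2 + ‖z.1.2 - z.2.2‖ ^ 2) := by fun_prop
    have hMfst : (Λ4.map gM).fst = Λ4.map ghat := by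
      rw [show (Λ4.map gM).fst = (Λ4.map gM).map Prod.fst from rfl,
        Measure.map_map measurable_fst hgMm]
      rfl
    have hMsnd : (Λ4.map gM).snd = μ := by
      rw [show (Λ4.map gM).snd = (Λ4.map gM).map Prod.snd from rfl,
        Measure.map_map measurable_snd hgMm]
      exact hLμ4
    have hmem : (∫ z, (‖z.1.1 - z.2.1‖ ^ 2 + ‖z.1.2 - z.2.2‖ ^ 2) ∂(Λ4.map gM))
        ∈ { r | ∃ Mm : Measure ((Euc d × Euc d) × (Euc d × Euc d)), IsProbabilityMeasure Mm ∧
          Mm.fst = Λ4.map ghat ∧ Mm.snd = μ ∧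
          r = ∫ z, (‖z.1.1 - z.2.1‖ ^ 2 + ‖z.1.2 - z.2.2‖ ^ 2) ∂Mm } :=
      ⟨Λ4.map gM, Measure.isProbabilityMeasure_map hgMm.aemeasurable, hMfst, hMsnd, rfl⟩
    have hbdd : BddBelow { r | ∃ Mm : Measure ((Euc d × Euc d) × (Euc d × Euc d)),
        IsProbabilityMeasure Mm ∧ Mm.fst = Λ4.map ghat ∧ Mm.snd = μ ∧
        r = ∫ z, (‖z.1.1 - z.2.1‖ ^ 2 + ‖z.1.2 - z.2.2‖ ^ 2) ∂Mm } := by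
      refine ⟨0, ?_⟩
      rintro r ⟨Mm, _, _, _, hr⟩
      rw [hr]
      exact integral_nonneg fun z => by positivity
    have hcostle : (∫ z, (‖z.1.1 - z.2.1‖ ^ 2 + ‖z.1.2 - z.2.2‖ ^ 2) ∂(Λ4.map gM))
        ≤ (e2N N μ0) ^ 2 + d2Msq μ1 M := by
      rw [integral_map hgMm.aemeasurable hcostm.aestronglyMeasurable]
      set c1 : ((Euc d × Euc d) × Euc d) × Euc d → ℝ := fun w => ‖w.1.1.1 - w.1.1.2‖ ^ 2
        with hc1def
      set c2 : ((Euc d × Euc d) × Euc d) × Euc d → ℝ := fun w => ‖w.2 - w.1.2‖ ^ 2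
        with hc2def
      have hc1m : Measurable c1 := by fun_prop
      have hc2m : Measurable c2 := by fun_prop
      have hce : (fun w => ‖(gM w).1.1 - (gM w).2.1‖ ^ 2 + ‖(gM w).1.2 - (gM w).2.2‖ ^ 2)
          = fun w => c1 w + c2 w := rfl
      by_cases hIc : Integrable
          (fun w => ‖(gM w).1.1 - (gM w).2.1‖ ^ 2 + ‖(gM w).1.2 - (gM w).2.2‖ ^ 2) Λ4
      · rw [hce] at hIc
        have hc1i : Integrable c1 Λ4 := by
          refine hIc.mono' hc1m.aestronglyMeasurable (Eventually.of_forall fun w => ?_)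
          rw [Real.norm_of_nonneg (by positivity)]
          have : (0:ℝ) ≤ c2 w := by rw [hc2def]; positivity
          linarith
        have hc2i : Integrable c2 Λ4 := by
          refine hIc.mono' hc2m.aestronglyMeasurable (Eventually.of_forall fun w => ?_)
          rw [Real.norm_of_nonneg (by positivity)]
          have : (0:ℝ) ≤ c1 w := by rw [hc1def]; positivity
          linarith
        have hce1 : ∫ w, c1 w ∂Λ4 = (e2N N μ0) ^ 2 := by
          have hgm : Measurable (fun z : Euc d × Euc d => ‖z.1 - z.2‖ ^ 2) := by fun_prop
          have : ∫ w, c1 w ∂Λ4 = ∫ z, ‖z.1 - z.2‖ ^ 2 ∂π0 := by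
            rw [← hL01, integral_map hp01m.aemeasurable hgm.aestronglyMeasurable]
          rw [this, ← hπ0cost]
          refine integral_congr_ae (Eventually.of_forall fun z => ?_)
          show ‖z.1 - z.2‖ ^ 2 = ‖z.2 - z.1‖ ^ 2
          rw [norm_sub_rev]
        have hce2 : ∫ w, c2 w ∂Λ4 = d2Msq μ1 M := by
          have hgm : Measurable (fun z : Euc d × Euc d => ‖z.2 - z.1‖ ^ 2) := by fun_prop
          have : ∫ w, c2 w ∂Λ4 = ∫ z, ‖z.2 - z.1‖ ^ 2 ∂π1 := by
            rw [← hL4π1, integral_map hpπ1m.aemeasurable hgm.aestronglyMeasurable]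
          rw [this, hπ1cost]
        rw [hce, integral_add hc1i hc2i, hce1, hce2]
      · rw [integral_undef hIc]
        exact add_nonneg (sq_nonneg _) hd2
    calc W2sqPair (Λ4.map ghat) μ
        ≤ ∫ z, (‖z.1.1 - z.2.1‖ ^ 2 + ‖z.1.2 - z.2.2‖ ^ 2) ∂(Λ4.map gM) := csInf_le hbdd hmem
    _ ≤ (e2N N μ0) ^ 2 + d2Msq μ1 M := hcostle

end
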